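/- Let K be a field, d, n > 1 integers, and r ≥ 1 an integer such that K has more than (r+1)²/2 elements (in particular any infinite K qualifies) and such that the binomial coefficient binom(d, i) is nonzero in K for all 0 ≤ i ≤ r. Then any r+1 distinct powerpoints of A_d are independent: if f_0, …, f_r ∈ A_1 are nonzero linear forms spanning pairwise distinct 1-spaces, then f_0^d, …, f_r^d are linearly independent over K. -/

import Mathlib

open MvPolynomial

-- Aux 1: avoid finitely many hyperplanes
lemma aux_avoid {K V ι : Type*} [Field K] [AddCommGroup V] [Module K V]
    (φ : ι → V →ₗ[K] K) (s : Finset ι) (hφ : ∀ i ∈ s, φ i ≠ 0)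
    (hs : (s.card : Cardinal) < Cardinal.mk K) :
    ∃ x : V, ∀ i ∈ s, φ i x ≠ 0 := by
  classical
  induction s using Finset.induction_on with
  | empty => exact ⟨0, by simp⟩
  | @insert j s' hj ih =>
    have hφ' : ∀ i ∈ s', φ i ≠ 0 := fun i hi => hφ i (Finset.mem_insert_of_mem hi)
    have hcard' : ((s'.card : ℕ) : Cardinal) < Cardinal.mk K := by
      refine lt_of_le_of_lt ?_ hs
      rw [Finset.card_insert_of_notMem hj]
      exact_mod_cast Nat.cast_le.2 (Nat.le_succ _)
    obtain ⟨x, hx⟩ := ih hφ' hcard'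
    by_cases hjx : φ j x ≠ 0
    · refine ⟨x, fun i hi => ?_⟩
      rcases Finset.mem_insert.1 hi with h | h
      · rwa [h]
      · exact hx i h
    · push_neg at hjx
      have hjne : φ j ≠ 0 := hφ j (Finset.mem_insert_self _ _)
      obtain ⟨y, hy⟩ : ∃ y, φ j y ≠ 0 := by
        by_contra h
        push_neg at h
        exact hjne (LinearMap.ext fun z => by simp [h z])
      set T : Finset K := (insert j s').image (fun i => -(φ i x) / (φ i y)) with hT
      obtain ⟨t, ht⟩ : ∃ t : K, t ∉ T := by
        by_contra h
        push_neg at h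
        have hsub : (Set.univ : Set K) ⊆ ↑T := fun z _ => h z
        have h1 : Cardinal.mk K ≤ (T.card : Cardinal) := by
          have := Cardinal.mk_le_mk_of_subset hsub
          rw [Cardinal.mk_univ] at this
          simpa [Cardinal.mk_coe_finset] using this
        have h2 : T.card ≤ (insert j s').card := Finset.card_image_le
        exact absurd (h1.trans_lt (lt_of_le_of_lt (Nat.cast_le.2 h2) hs)) (lt_irrefl _)
      refine ⟨x + t • y, fun i hi => ?_⟩
      rw [map_add, map_smul, smul_eq_mul]
      by_cases hiy : φ i y = 0
      · have hi' : i ∈ s' := by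
          rcases Finset.mem_insert.1 hi with h | h
          · exact absurd (h ▸ hiy) hy
          · exact h
        simpa [hiy] using hx i hi'
      · intro hcon
        apply ht
        rw [hT]
        refine Finset.mem_image.2 ⟨i, hi, ?_⟩
        show -(φ i x) / (φ i y) = t
        rw [div_eq_iff hiy]
        linear_combination -hcon
open MvPolynomial

lemma aux_degree_one {σ : Type*} (m : σ →₀ ℕ) (h : m.degree = 1) :
    ∃ k, m = Finsupp.single k 1 := by
  classical
  have hne : m ≠ 0 := by
    intro h0; rw [h0, map_zero] at h; exact one_ne_zero h.symm
  obtain ⟨k, hk⟩ := Finsupp.support_nonempty_iff.2 hne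
  have hk1 : 1 ≤ m k := Nat.one_le_iff_ne_zero.2 (Finsupp.mem_support_iff.1 hk)
  have hle : m k ≤ m.degree := by
    rw [Finsupp.degree]
    exact Finset.single_le_sum (fun _ _ => Nat.zero_le _) hk
  have hmk : m k = 1 := le_antisymm (h ▸ hle) hk1
  have hrest : ∑ a ∈ m.support.erase k, m a = 0 := by
    have := Finset.add_sum_erase _ m hk
    rw [← Finsupp.degree_apply, h, hmk] at this
    omega
  refine ⟨k, Finsupp.ext fun a => ?_⟩
  by_cases hak : a = k
  · simp [hak, hmk]
  · rw [Finsupp.single_apply, if_neg (Ne.symm hak)]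
    by_cases ha : a ∈ m.support
    · exact Finset.sum_eq_zero_iff.1 hrest a (Finset.mem_erase.2 ⟨hak, ha⟩)
    · exact Finsupp.notMem_support_iff.1 ha

lemma aux_repr {K σ : Type*} [CommSemiring K] [Fintype σ] {f : MvPolynomial σ K}
    (hf : f.IsHomogeneous 1) :
    f = ∑ k, C (coeff (Finsupp.single k 1) f) * X k := by
  classical
  apply MvPolynomial.ext
  intro m
  rw [coeff_sum]
  simp only [coeff_C_mul, coeff_X', mul_ite, mul_one, mul_zero]
  by_cases hm : m.degree = 1
  · obtain ⟨k0, rfl⟩ := aux_degree_one m hm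
    rw [Finset.sum_eq_single k0]
    · rw [if_pos rfl]
    · intro b _ hb
      rw [if_neg]
      intro hcon
      exact hb (Finsupp.single_left_injective one_ne_zero hcon)
    · intro h; exact absurd (Finset.mem_univ k0) h
  · rw [hf.coeff_eq_zero hm]
    refine (Finset.sum_eq_zero fun k _ => ?_).symm
    rw [if_neg]
    intro hcon
    apply hm
    rw [← hcon, Finsupp.degree_apply, Finsupp.support_single_ne_zero _ one_ne_zero,
      Finset.sum_singleton, Finsupp.single_eq_same]

lemma aux_coeff_pow {K : Type*} [CommRing K] (a b : K) (d k : ℕ) (h : k ≤ d) :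
    ((Polynomial.C a * Polynomial.X + Polynomial.C b) ^ d).coeff k
      = (d.choose k : K) * (a ^ k * b ^ (d - k)) := by
  rw [add_pow, Polynomial.finset_sum_coeff]
  have hterm : ∀ m, (Polynomial.C a * Polynomial.X) ^ m * Polynomial.C b ^ (d - m)
      * (d.choose m : Polynomial K)
      = Polynomial.C ((d.choose m : K) * (a ^ m * b ^ (d - m))) * Polynomial.X ^ m := by
    intro m
    rw [mul_pow, ← Polynomial.C_pow, ← Polynomial.C_pow, ← Polynomial.C_eq_natCast]
    simp only [Polynomial.C_mul]
    ring
  simp only [hterm, Polynomial.coeff_C_mul, Polynomial.coeff_X_pow]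
  rw [Finset.sum_eq_single k]
  · simp
  · intro m _ hm
    simp [if_neg (Ne.symm hm)]
  · intro hk
    exact absurd (Finset.mem_range.2 (Nat.lt_succ_of_le h)) hk


/-- If `K` has more than `(r+1)²/2` elements and the binomial coefficients
`d.choose i`, `0 ≤ i ≤ r`, are nonzero in `K`, then any `r+1` distinct
powerpoints of `A_d` are independent. -/
theorem powerpoint_independence_small_char (K : Type*) [Field K] (d n r : ℕ)
    (hd : 1 < d) (hn : 1 < n) (hr : 1 ≤ r)
    (hK : ((r + 1) ^ 2 : Cardinal) < 2 * Cardinal.mk K)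
    (hbin : ∀ i ≤ r, (d.choose i : K) ≠ 0)
    (f : Fin (r + 1) → MvPolynomial (Fin n) K)
    (hf : ∀ i, f i ∈ homogeneousSubmodule (Fin n) K 1)
    (hf0 : ∀ i, f i ≠ 0)
    (hfd : ∀ i j, i ≠ j →
      Submodule.span K {f i} ≠ Submodule.span K {f j}) :
    LinearIndependent K (fun i => f i ^ d) := by
  classical
  have hrd : r ≤ d := by
    by_contra h
    push_neg at h
    exact hbin r le_rfl (by rw [Nat.choose_eq_zero_of_lt h, Nat.cast_zero])
  rw [Fintype.linearIndependent_iff]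
  intro c hc
  set u : Fin (r+1) → Fin n → K := fun i k => coeff (Finsupp.single k 1) (f i) with hu
  have hrep : ∀ i, f i = ∑ k, C (u i k) * X k := fun i =>
    aux_repr ((mem_homogeneousSubmodule 1 (f i)).1 (hf i))
  -- the dot-product linear forms
  set φ : Fin (r+1) → ((Fin n → K) →ₗ[K] K) := fun i =>
    { toFun := fun w => ∑ k, u i k * w k
      map_add' := by intro w1 w2; simp [mul_add, Finset.sum_add_distrib]
      map_smul' := by intro t w1; simp [Finset.mul_sum, mul_left_comm] } with hφdef
  have hφ_apply : ∀ i w', φ i w' = ∑ k, u i k * w' k := fun i w' => rfl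
  have hφ_single : ∀ i k0, φ i (Pi.single k0 1) = u i k0 := by
    intro i k0
    rw [hφ_apply]
    simp [Pi.single_apply, mul_ite]
  have hφ0 : ∀ i, φ i ≠ 0 := by
    intro i h0
    apply hf0 i
    rw [hrep i]
    apply Finset.sum_eq_zero
    intro k _
    have hk : u i k = 0 := by rw [← hφ_single i k, h0]; simp
    rw [hk]; simp
  -- cardinality facts
  have hlt : ∀ m : ℕ, 2 * m ≤ (r+1)^2 → ((m : ℕ) : Cardinal) < Cardinal.mk K := by
    intro m hm
    by_contra hcon
    push_neg at hcon
    have h1 : 2 * Cardinal.mk K ≤ 2 * ((m : ℕ) : Cardinal) := mul_le_mul_right hcon 2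
    have h2 : (((2 * m : ℕ)) : Cardinal) ≤ (((r+1)^2 : ℕ) : Cardinal) := Nat.cast_le.2 hm
    have h3 : (((r+1)^2 : ℕ) : Cardinal) = ((r + 1) ^ 2 : Cardinal) := by push_cast; ring
    have h4 : (((2 * m : ℕ)) : Cardinal) = 2 * ((m : ℕ) : Cardinal) := by push_cast; ring
    rw [h3, h4] at h2
    exact absurd (lt_of_lt_of_le hK (le_trans h1 h2)) (lt_irrefl _)
  -- choose w making all a i nonzero
  have hcard1 : (((Finset.univ : Finset (Fin (r+1))).card : ℕ) : Cardinal) < Cardinal.mk K := by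
    rw [Finset.card_univ, Fintype.card_fin]
    refine hlt (r+1) ?_
    have : (r+1)^2 = (r+1)*(r+1) := by ring
    rw [this]
    exact Nat.mul_le_mul_right (r+1) (by omega)
  obtain ⟨w, hw⟩ := aux_avoid φ Finset.univ (fun i _ => hφ0 i) hcard1
  set a : Fin (r+1) → K := fun i => φ i w with hadef
  have ha : ∀ i, a i ≠ 0 := fun i => hw i (Finset.mem_univ i)
  -- cross forms are nonzero
  have hcross_ne : ∀ i j, i ≠ j → (a i • φ j - a j • φ i) ≠ 0 := by
    intro i j hij h0
    have hk : ∀ k, a i * u j k - a j * u i k = 0 := by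
      intro k
      have h1 := LinearMap.congr_fun h0 (Pi.single k 1)
      simpa [LinearMap.sub_apply, LinearMap.smul_apply, smul_eq_mul, hφ_single, sub_eq_zero]
        using h1
    set t : K := a j / a i with htdef
    have huj : ∀ k, u j k = t * u i k := by
      intro k
      rw [htdef, div_mul_eq_mul_div, eq_div_iff (ha i)]
      linear_combination hk k
    have hfj : f j = t • f i := by
      rw [hrep j, hrep i, Finset.smul_sum]
      refine Finset.sum_congr rfl fun k _ => ?_
      rw [huj k, MvPolynomial.smul_eq_C_mul, ← mul_assoc, ← C_mul]
    have ht0 : t ≠ 0 := by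
      intro h
      apply hf0 j
      rw [hfj, h, zero_smul]
    apply hfd j i (Ne.symm hij)
    rw [hfj]
    exact Submodule.span_singleton_smul_eq (isUnit_iff_ne_zero.2 ht0) _
  -- symmetric family of cross forms
  set g : Fin (r+1) → Fin (r+1) → ((Fin n → K) →ₗ[K] K) := fun i j =>
    if i ≤ j then a i • φ j - a j • φ i else a j • φ i - a i • φ j with hgdef
  have hgsymm : ∀ i j, g i j = g j i := by
    intro i j
    by_cases hij : i = j
    · rw [hij]
    · rcases lt_or_gt_of_ne hij with h | h
      · rw [hgdef]
        simp only
        rw [if_pos (le_of_lt h), if_neg (not_le.2 h)]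
      · rw [hgdef]
        simp only
        rw [if_neg (not_le.2 h), if_pos (le_of_lt h)]
  set χ : Sym2 (Fin (r+1)) → ((Fin n → K) →ₗ[K] K) := Sym2.lift ⟨g, hgsymm⟩ with hχdef
  set sv : Finset (Sym2 (Fin (r+1))) := Finset.univ.offDiag.image Sym2.mk.uncurry with hsvdef
  have hχ0 : ∀ z ∈ sv, χ z ≠ 0 := by
    intro z hz
    obtain ⟨p, hp, rfl⟩ := Finset.mem_image.1 hz
    have hne : p.1 ≠ p.2 := (Finset.mem_offDiag.1 hp).2.2
    have hzval : χ (Sym2.mk.uncurry p) = g p.1 p.2 := by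
      rw [hχdef]; exact Sym2.lift_mk _ _ _
    rw [hzval, hgdef]
    simp only
    split_ifs with h
    · exact hcross_ne p.1 p.2 hne
    · exact hcross_ne p.2 p.1 (Ne.symm hne)
  have hcard2 : ((sv.card : ℕ) : Cardinal) < Cardinal.mk K := by
    rw [hsvdef, Sym2.card_image_offDiag, Finset.card_univ, Fintype.card_fin]
    refine hlt ((r+1).choose 2) ?_
    rw [Nat.choose_two_right]
    have h5 : (r+1) - 1 = r := by omega
    rw [h5]
    have hdvd : 2 ∣ (r+1) * r := by
      rw [mul_comm]
      exact (Nat.even_mul_succ_self r).two_dvd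
    calc 2 * ((r+1) * r / 2) = (r+1) * r := Nat.mul_div_cancel' hdvd
      _ ≤ (r+1)^2 := by nlinarith
  obtain ⟨v, hv⟩ := aux_avoid χ sv hχ0 hcard2
  set b : Fin (r+1) → K := fun i => φ i v with hbdef
  have hcrossv : ∀ i j, i ≠ j → a i * b j - a j * b i ≠ 0 := by
    intro i j hij
    have hz : Sym2.mk i j ∈ sv := by
      rw [hsvdef]
      exact Finset.mem_image.2 ⟨(i,j), Finset.mem_offDiag.2
        ⟨Finset.mem_univ _, Finset.mem_univ _, hij⟩, rfl⟩
    have hval := hv _ hz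
    have hzval : χ (Sym2.mk i j) = g i j := by rw [hχdef, Sym2.lift_mk]
    rw [hzval, hgdef] at hval
    simp only at hval
    split_ifs at hval with h
    · intro hcon
      apply hval
      rw [LinearMap.sub_apply, LinearMap.smul_apply, LinearMap.smul_apply,
        smul_eq_mul, smul_eq_mul]
      exact hcon
    · intro hcon
      apply hval
      rw [LinearMap.sub_apply, LinearMap.smul_apply, LinearMap.smul_apply,
        smul_eq_mul, smul_eq_mul]
      linear_combination -hcon
  -- the slopes are injective
  have hμinj : Function.Injective (fun i => b i / a i) := by
    intro i j hij0
    by_contra hne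
    apply hcrossv i j hne
    simp only at hij0
    have h1 : b i * a j = b j * a i := (div_eq_div_iff (ha i) (ha j)).1 hij0
    linear_combination -h1
  -- push everything into one variable
  set Φ : MvPolynomial (Fin n) K →ₐ[K] Polynomial K :=
    aeval (fun k => Polynomial.C (w k) * Polynomial.X + Polynomial.C (v k)) with hΦdef
  have hΦf : ∀ i, Φ (f i) = Polynomial.C (a i) * Polynomial.X + Polynomial.C (b i) := by
    intro i
    rw [hrep i, map_sum]
    have hterm : ∀ k, Φ (C (u i k) * X k)
        = Polynomial.C (u i k * w k) * Polynomial.X + Polynomial.C (u i k * v k) := by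
      intro k
      rw [hΦdef, map_mul, aeval_C, aeval_X, Polynomial.algebraMap_eq,
        Polynomial.C_mul, Polynomial.C_mul]
      ring
    rw [Finset.sum_congr rfl (fun k _ => hterm k), Finset.sum_add_distrib,
      ← Finset.sum_mul, ← map_sum Polynomial.C, ← map_sum Polynomial.C]
    rfl
  have hP : ∑ i, c i • (Polynomial.C (a i) * Polynomial.X + Polynomial.C (b i)) ^ d
      = (0 : Polynomial K) := by
    have h1 := congrArg Φ hc
    rw [map_sum, map_zero] at h1
    calc ∑ i, c i • (Polynomial.C (a i) * Polynomial.X + Polynomial.C (b i)) ^ d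
        = ∑ i, Φ (c i • f i ^ d) := by
          refine Finset.sum_congr rfl fun i _ => ?_
          rw [map_smul, map_pow, hΦf i]
      _ = 0 := h1
  -- extract coefficients
  have hEq : ∀ j : Fin (r+1), ∑ i, (c i * a i ^ d) * (b i / a i) ^ (j : ℕ) = 0 := by
    intro j
    have hjr : (j : ℕ) ≤ r := Nat.lt_succ_iff.1 j.isLt
    have hjd : (j : ℕ) ≤ d := le_trans hjr hrd
    have h1 : ∑ i, c i * ((d.choose (d - (j:ℕ)) : K)
        * (a i ^ (d - (j:ℕ)) * b i ^ (d - (d - (j:ℕ))))) = 0 := by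
      have h0 := congrArg (fun p => Polynomial.coeff p (d - (j:ℕ))) hP
      simp only [Polynomial.finset_sum_coeff, Polynomial.coeff_smul, smul_eq_mul,
        Polynomial.coeff_zero] at h0
      rw [← h0]
      exact Finset.sum_congr rfl fun i _ => by
        rw [aux_coeff_pow _ _ _ _ (Nat.sub_le d _)]
    simp only [Nat.sub_sub_self hjd, Nat.choose_symm hjd] at h1
    have h2 : ∀ i, c i * ((d.choose (j:ℕ) : K) * (a i ^ (d - (j:ℕ)) * b i ^ (j:ℕ)))
        = (d.choose (j:ℕ) : K) * ((c i * a i ^ d) * (b i / a i) ^ (j:ℕ)) := by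
      intro i
      have hpow : a i ^ d = a i ^ (d - (j:ℕ)) * a i ^ (j:ℕ) := by
        rw [← pow_add, Nat.sub_add_cancel hjd]
      have hinv : a i ^ (j:ℕ) * (a i)⁻¹ ^ (j:ℕ) = 1 := by
        rw [← mul_pow, mul_inv_cancel₀ (ha i), one_pow]
      rw [div_pow, hpow]
      field_simp
      linear_combination (-(c i * (d.choose (j:ℕ) : K) * a i ^ (d - (j:ℕ)) * b i ^ (j:ℕ))) * hinv
    rw [Finset.sum_congr rfl (fun i _ => h2 i), ← Finset.mul_sum] at h1
    rcases mul_eq_zero.1 h1 with h | h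
    · exact absurd h (hbin _ hjr)
    · exact h
  have hzero := Matrix.eq_zero_of_forall_pow_sum_mul_pow_eq_zero hμinj hEq
  intro i
  have hi := congrFun hzero i
  simp only [Pi.zero_apply] at hi
  rcases mul_eq_zero.1 hi with h | h
  · exact h
  · exact absurd h (pow_ne_zero d (ha i))
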